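/- Let h, n be positive integers with d_max ≤ h, and let v ∈ F₂^h have Hamming weight l with 1 ≤ l ≤ h. If G ∈ F₂^{h×n} is the random LT generator matrix (n i.i.d. LT columns), then for every 0 ≤ d ≤ n the probability that the codeword vᵀG has Hamming weight d equals C(n,d)·p_l^d·(1−p_l)^{n−d}. -/

import Mathlib

open Finset

/-- Probability that the LT column distribution on `F₂^h` produces the particular
column `c`. -/
noncomputable def colP (dmax : ℕ) (Ω : ℕ → ℝ) {h : ℕ} (c : Fin h → ZMod 2) : ℝ :=
  if 1 ≤ hammingNorm c ∧ hammingNorm c ≤ dmax then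
    Ω (hammingNorm c) / (h.choose (hammingNorm c)) else 0

/-- `p_{j,l} = Σ_{i odd, max(1, l+j−h) ≤ i ≤ min(l,j)} C(j,i)·C(h−j, l−i)/C(h,l)`. -/
noncomputable def pjl (h j l : ℕ) : ℝ :=
  ∑ i ∈ (Finset.Icc (max 1 (l + j - h)) (min l j)).filter (fun i => Odd i),
    ((j.choose i : ℝ) * ((h - j).choose (l - i) : ℝ)) / (h.choose l : ℝ)

/-- `p_l = Σ_{j=1}^{dmax} Ω_j · p_{j,l}`. -/
noncomputable def pl (dmax : ℕ) (Ω : ℕ → ℝ) (h l : ℕ) : ℝ :=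
  ∑ j ∈ Finset.Icc 1 dmax, Ω j * pjl h j l

namespace LTAux

lemma zmod2_ne_zero (x : ZMod 2) : x ≠ 0 ↔ x = 1 := by revert x; decide

lemma natCast_zmod2_eq_one_iff (N : ℕ) : (N : ZMod 2) = 1 ↔ Odd N := by
  rw [Nat.odd_iff, ← ZMod.natCast_mod N 2]
  rcases Nat.mod_two_eq_zero_or_one N with h | h <;> rw [h] <;> simp

lemma hammingNorm_eq_card {ι : Type*} [Fintype ι] (x : ι → ZMod 2) :
    hammingNorm x = (univ.filter fun i => x i ≠ 0).card := rfl

/-- Counting vectors by their intersection pattern with a fixed set `T`. -/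
lemma count_pairs {h : ℕ} (T : Finset (Fin h)) (a b : ℕ) :
    ((univ : Finset (Fin h → ZMod 2)).filter fun c =>
        ((univ.filter fun r => c r ≠ 0) ∩ T).card = a ∧
        ((univ.filter fun r => c r ≠ 0) \ T).card = b).card =
      T.card.choose a * Tᶜ.card.choose b := by
  rw [← Finset.card_powersetCard, ← Finset.card_powersetCard, ← Finset.card_product]
  apply Finset.card_nbij'
    (i := fun c => ((univ.filter fun r => c r ≠ 0) ∩ T, (univ.filter fun r => c r ≠ 0) \ T))
    (j := fun Pr => fun r => if r ∈ Pr.1 ∪ Pr.2 then 1 else 0)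
  · intro c hc
    simp only [Finset.mem_coe, mem_filter, mem_univ, true_and] at hc
    simp only [Finset.mem_coe, mem_product, mem_powersetCard]
    exact ⟨⟨inter_subset_right, hc.1⟩, ⟨fun r hr => by
      simp only [mem_sdiff] at hr; simpa using hr.2, hc.2⟩⟩
  · rintro ⟨A, B⟩ hAB
    simp only [Finset.mem_coe, mem_product, mem_powersetCard] at hAB
    obtain ⟨⟨hAT, hA⟩, ⟨hBT, hB⟩⟩ := hAB
    have hsupp : (univ.filter fun r => (if r ∈ A ∪ B then (1 : ZMod 2) else 0) ≠ 0) = A ∪ B := by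
      ext r
      simp only [mem_filter, mem_univ, true_and]
      by_cases hr : r ∈ A ∪ B
      · rw [if_pos hr]
        exact iff_of_true one_ne_zero hr
      · rw [if_neg hr]
        exact iff_of_false (by simp) hr
    simp only [Finset.mem_coe, mem_filter, mem_univ, true_and, hsupp]
    have hABd : Disjoint A B := by
      rw [Finset.disjoint_left]
      intro r hrA hrB
      have := hBT hrB
      simp only [Finset.mem_compl] at this
      exact this (hAT hrA)
    constructor
    · have : (A ∪ B) ∩ T = A := by
        rw [Finset.union_inter_distrib_right]
        have h1 : A ∩ T = A := Finset.inter_eq_left.mpr hAT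
        have h2 : B ∩ T = ∅ := by
          rw [← Finset.disjoint_iff_inter_eq_empty, Finset.disjoint_left]
          intro r hrB hrT
          have := hBT hrB; simp only [Finset.mem_compl] at this; exact this hrT
        rw [h1, h2, Finset.union_empty]
      rw [this, hA]
    · have : (A ∪ B) \ T = B := by
        rw [Finset.union_sdiff_distrib]
        have h1 : A \ T = ∅ := by
          rw [Finset.sdiff_eq_empty_iff_subset]; exact hAT
        have h2 : B \ T = B := by
          rw [Finset.sdiff_eq_self_iff_disjoint, Finset.disjoint_left]
          intro r hrB hrT
          have := hBT hrB; simp only [Finset.mem_compl] at this; exact this hrT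
        rw [h1, h2, Finset.empty_union]
      rw [this, hB]
  · intro c hc
    funext r
    have hcup : ((univ.filter fun r => c r ≠ 0) ∩ T) ∪ ((univ.filter fun r => c r ≠ 0) \ T)
        = univ.filter fun r => c r ≠ 0 := by
      rw [Finset.union_comm, Finset.sdiff_union_inter]
    beta_reduce
    rw [hcup]
    by_cases hr : c r = 0
    · rw [if_neg (by simp [hr])]
      exact hr.symm
    · rw [if_pos (by simp [hr]), (zmod2_ne_zero (c r)).mp hr]
  · rintro ⟨A, B⟩ hAB
    simp only [Finset.mem_coe, mem_product, mem_powersetCard] at hAB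
    obtain ⟨⟨hAT, hA⟩, ⟨hBT, hB⟩⟩ := hAB
    have hsupp : (univ.filter fun r => (if r ∈ A ∪ B then (1 : ZMod 2) else 0) ≠ 0) = A ∪ B := by
      ext r
      simp only [mem_filter, mem_univ, true_and]
      by_cases hr : r ∈ A ∪ B
      · rw [if_pos hr]
        exact iff_of_true one_ne_zero hr
      · rw [if_neg hr]
        exact iff_of_false (by simp) hr
    have h2 : B ∩ T = ∅ := by
      rw [← Finset.disjoint_iff_inter_eq_empty, Finset.disjoint_left]
      intro r hrB hrT
      have := hBT hrB; simp only [Finset.mem_compl] at this; exact this hrT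
    have hint : (A ∪ B) ∩ T = A := by
      rw [Finset.union_inter_distrib_right, Finset.inter_eq_left.mpr hAT, h2, Finset.union_empty]
    have hsd : (A ∪ B) \ T = B := by
      rw [Finset.union_sdiff_distrib, Finset.sdiff_eq_empty_iff_subset.mpr hAT,
        Finset.empty_union, Finset.sdiff_eq_self_iff_disjoint, Finset.disjoint_left]
      intro r hrB hrT
      have := hBT hrB; simp only [Finset.mem_compl] at this; exact this hrT
    simp only [hsupp, hint, hsd]

/-- The hypergeometric/binomial coefficient exchange identity. -/
lemma choose_exchange {h l j i : ℕ} (hl : l ≤ h) (hj : j ≤ h) (hil : i ≤ l) (hij : i ≤ j)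
    (hlo : l + j ≤ h + i) :
    h.choose l * (l.choose i * (h - l).choose (j - i)) =
      h.choose j * (j.choose i * (h - j).choose (l - i)) := by
  have e1 : h.choose l * l.choose i = h.choose i * (h - i).choose (l - i) :=
    Nat.choose_mul (n := h) hil
  have e2 : h.choose j * j.choose i = h.choose i * (h - i).choose (j - i) :=
    Nat.choose_mul (n := h) hij
  have key : (h - i).choose (l - i) * (h - l).choose (j - i) =
      (h - i).choose (j - i) * (h - j).choose (l - i) := by
    set m := h - i with hm
    set a := l - i with ha
    set b := j - i with hb
    have hab : a + b ≤ m := by omega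
    have hml : h - l = m - a := by omega
    have hmj : h - j = m - b := by omega
    rw [hml, hmj]
    have f1 : m.choose (a + b) * (a + b).choose a = m.choose a * (m - a).choose b := by
      have := Nat.choose_mul (n := m) (k := a + b) (s := a) (Nat.le_add_right a b)
      simpa using this
    have f2 : m.choose (a + b) * (a + b).choose b = m.choose b * (m - b).choose a := by
      have := Nat.choose_mul (n := m) (k := a + b) (s := b) (Nat.le_add_left b a)
      simpa [Nat.add_sub_cancel_left] using this
    have hsymm : (a + b).choose a = (a + b).choose b := by
      have := Nat.choose_symm (n := a + b) (k := a) (Nat.le_add_right a b)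
      simpa [Nat.add_sub_cancel_left] using this.symm
    calc m.choose a * (m - a).choose b = m.choose (a + b) * (a + b).choose a := f1.symm
      _ = m.choose (a + b) * (a + b).choose b := by rw [hsymm]
      _ = m.choose b * (m - b).choose a := f2
  calc h.choose l * (l.choose i * (h - l).choose (j - i))
      = (h.choose l * l.choose i) * (h - l).choose (j - i) := by ring
    _ = (h.choose i * (h - i).choose (l - i)) * (h - l).choose (j - i) := by rw [e1]
    _ = h.choose i * ((h - i).choose (l - i) * (h - l).choose (j - i)) := by ring
    _ = h.choose i * ((h - i).choose (j - i) * (h - j).choose (l - i)) := by rw [key]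
    _ = (h.choose i * (h - i).choose (j - i)) * (h - j).choose (l - i) := by ring
    _ = (h.choose j * j.choose i) * (h - j).choose (l - i) := by rw [e2]
    _ = h.choose j * (j.choose i * (h - j).choose (l - i)) := by ring

/-- Generic binomial sum over i.i.d. coordinates. -/
lemma sum_binom {α : Type*} [Fintype α] [DecidableEq α] (f : α → ℝ) (p : α → Prop)
    [DecidablePred p] : ∀ (n d : ℕ),
    (∑ g ∈ (univ : Finset (Fin n → α)).filter
        (fun g => (univ.filter fun i => p (g i)).card = d), ∏ i, f (g i)) =
      (n.choose d : ℝ) * (∑ a ∈ univ.filter p, f a) ^ d *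
        (∑ a ∈ univ.filter (fun a => ¬ p a), f a) ^ (n - d) := by
  intro n
  induction n with
  | zero =>
    intro d
    cases d with
    | zero => simp
    | succ s =>
      rw [Finset.filter_false_of_mem, Finset.sum_empty]
      · simp
      · intro g _
        simp
  | succ n ih =>
    intro d
    set q : ℝ := ∑ a ∈ univ.filter p, f a with hq
    set r : ℝ := ∑ a ∈ univ.filter (fun a => ¬ p a), f a with hr
    -- rewrite sum over Fin (n+1) → α as sum over α × (Fin n → α)
    have hsum : (∑ g ∈ (univ : Finset (Fin (n+1) → α)).filter
          (fun g => (univ.filter fun i => p (g i)).card = d), ∏ i, f (g i)) =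
        ∑ a : α, ∑ g : Fin n → α,
          (if (if p a then 1 else 0) + (univ.filter fun i => p (g i)).card = d
            then f a * ∏ i, f (g i) else 0) := by
      rw [Finset.sum_filter]
      rw [← Equiv.sum_comp (Fin.consEquiv (fun _ : Fin (n+1) => α))]
      rw [Fintype.sum_prod_type]
      apply Finset.sum_congr rfl
      intro a _
      apply Finset.sum_congr rfl
      intro g _
      simp only [Fin.consEquiv_apply]
      have hcard : (univ.filter fun i : Fin (n+1) =>
          p (Fin.cons (α := fun _ : Fin (n+1) => α) a g i)).card
          = (if p a then 1 else 0) + (univ.filter fun i : Fin n => p (g i)).card := by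
        rw [Finset.card_filter, Finset.card_filter, Fin.sum_univ_succ]
        simp
      have hprod : (∏ i : Fin (n+1), f (Fin.cons (α := fun _ : Fin (n+1) => α) a g i))
          = f a * ∏ i : Fin n, f (g i) := by
        rw [Fin.prod_univ_succ]
        simp
      simp only [Fin.consEquiv_apply, hcard, hprod]
    rw [hsum]
    rw [← Finset.sum_filter_add_sum_filter_not univ p]
    have hpa : (∑ a ∈ univ.filter p, ∑ g : Fin n → α,
        (if (if p a then 1 else 0) + (univ.filter fun i => p (g i)).card = d
          then f a * ∏ i, f (g i) else 0)) =
        ∑ a ∈ univ.filter p, f a * ∑ g ∈ (univ : Finset (Fin n → α)).filter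
          (fun g => 1 + (univ.filter fun i => p (g i)).card = d), ∏ i, f (g i) := by
      apply Finset.sum_congr rfl
      intro a ha
      simp only [mem_filter] at ha
      rw [Finset.mul_sum, Finset.sum_filter]
      apply Finset.sum_congr rfl
      intro g _
      rw [if_pos ha.2]
    have hpb : (∑ a ∈ univ.filter (fun a => ¬ p a), ∑ g : Fin n → α,
        (if (if p a then 1 else 0) + (univ.filter fun i => p (g i)).card = d
          then f a * ∏ i, f (g i) else 0)) =
        ∑ a ∈ univ.filter (fun a => ¬ p a), f a * ∑ g ∈ (univ : Finset (Fin n → α)).filter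
          (fun g => (univ.filter fun i => p (g i)).card = d), ∏ i, f (g i) := by
      apply Finset.sum_congr rfl
      intro a ha
      simp only [mem_filter] at ha
      rw [Finset.mul_sum, Finset.sum_filter]
      apply Finset.sum_congr rfl
      intro g _
      rw [if_neg ha.2, Nat.zero_add]
    rw [hpa, hpb, ← Finset.sum_mul, ← Finset.sum_mul, ← hq, ← hr]
    cases d with
    | zero =>
      have h1 : (univ : Finset (Fin n → α)).filter
          (fun g => 1 + (univ.filter fun i => p (g i)).card = 0) = ∅ := by
        apply Finset.filter_false_of_mem
        intro g _
        omega
      rw [h1, Finset.sum_empty, mul_zero, zero_add, ih 0]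
      simp [pow_succ]
      ring
    | succ s =>
      have h1 : (univ : Finset (Fin n → α)).filter
          (fun g => 1 + (univ.filter fun i => p (g i)).card = s + 1) =
          (univ : Finset (Fin n → α)).filter
          (fun g => (univ.filter fun i => p (g i)).card = s) := by
        apply Finset.filter_congr
        intro g _
        constructor <;> intro hg <;> omega
      rw [h1, ih s, ih (s + 1)]
      rw [Nat.choose_succ_succ]
      push_cast
      rcases le_or_gt (s + 1) n with hsn | hsn
      · have e1 : n - s = (n - (s + 1)) + 1 := by omega
        have e2 : n + 1 - (s + 1) = n - s := by omega
        simp only [Nat.succ_eq_add_one]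
        rw [e1]
        ring
      · have c2 : n.choose (s + 1) = 0 := Nat.choose_eq_zero_of_lt hsn
        rcases le_or_gt (s + 1) (n + 1) with hsn1 | hsn1
        · have hsn' : s = n := by omega
          subst hsn'
          simp [c2, Nat.sub_self]
          ring
        · have c1 : n.choose s = 0 := Nat.choose_eq_zero_of_lt (by omega)
          have c3 : (n + 1).choose (s + 1) = 0 := Nat.choose_eq_zero_of_lt hsn1
          simp [c1, c2, c3]

/-- Group a sum of `colP` over any set of columns by Hamming weight. -/
lemma sum_colP_group (dmax h : ℕ) (Ω : ℕ → ℝ) (S : Finset (Fin h → ZMod 2)) :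
    ∑ c ∈ S, colP dmax Ω c =
      ∑ j ∈ Finset.Icc 1 dmax, (Ω j / (h.choose j : ℝ)) *
        ((S.filter fun c => hammingNorm c = j).card : ℝ) := by
  have hcol : ∀ c : Fin h → ZMod 2, colP dmax Ω c =
      ∑ j ∈ Finset.Icc 1 dmax,
        if hammingNorm c = j then Ω j / (h.choose j : ℝ) else 0 := by
    intro c
    rw [Finset.sum_ite_eq]
    simp [colP, Finset.mem_Icc]
  rw [Finset.sum_congr rfl fun c _ => hcol c, Finset.sum_comm]
  apply Finset.sum_congr rfl
  intro j _
  rw [← Finset.sum_filter, Finset.sum_const, nsmul_eq_mul, mul_comm]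

/-- Count of weight-`j` columns with odd overlap with the support of `v`. -/
lemma count_dot {h : ℕ} (l j : ℕ) (v : Fin h → ZMod 2) (hwt : hammingNorm v = l)
    (hlh : l ≤ h) (hjh : j ≤ h) :
    ((univ.filter fun c : Fin h → ZMod 2 =>
        dotProduct v c = 1 ∧ hammingNorm c = j).card) =
      ∑ i ∈ (Finset.Icc (max 1 (l + j - h)) (min l j)).filter (fun i => Odd i),
        l.choose i * (h - l).choose (j - i) := by
  classical
  set T : Finset (Fin h) := univ.filter (fun r => v r ≠ 0) with hT
  have hTcard : T.card = l := hwt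
  have hdot : ∀ c : Fin h → ZMod 2, dotProduct v c = 1 ↔
      Odd (((univ.filter fun r => c r ≠ 0) ∩ T).card) := by
    intro c
    have key : dotProduct v c =
        ((((univ.filter fun r => c r ≠ 0) ∩ T).card : ℕ) : ZMod 2) := by
      rw [dotProduct]
      have : ∀ r : Fin h, v r * c r =
          if r ∈ (univ.filter fun r => c r ≠ 0) ∩ T then (1 : ZMod 2) else 0 := by
        intro r
        by_cases hv : v r = 0
        · rw [hv, zero_mul, if_neg (by simp [hT, hv])]
        · by_cases hc : c r = 0
          · rw [hc, mul_zero, if_neg (by simp [hc])]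
          · rw [(zmod2_ne_zero _).mp hv, (zmod2_ne_zero _).mp hc, one_mul,
              if_pos (by simp [hT, hv, hc])]
      rw [Finset.sum_congr rfl fun r _ => this r, Finset.sum_ite_mem, Finset.univ_inter,
        Finset.sum_const, nsmul_eq_mul, mul_one]
    rw [key, natCast_zmod2_eq_one_iff]
  have hsub : ∀ c : Fin h → ZMod 2,
      ((univ.filter fun r => c r ≠ 0) \ T).card ≤ h - l := by
    intro c
    have h1 : (univ.filter fun r => c r ≠ 0) \ T ⊆ Tᶜ := by
      intro r hr
      simp only [Finset.mem_sdiff] at hr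
      simpa using hr.2
    calc ((univ.filter fun r => c r ≠ 0) \ T).card ≤ Tᶜ.card := Finset.card_le_card h1
      _ = h - l := by rw [Finset.card_compl, hTcard, Fintype.card_fin]
  have hsplit : ∀ c : Fin h → ZMod 2,
      ((univ.filter fun r => c r ≠ 0) ∩ T).card +
        ((univ.filter fun r => c r ≠ 0) \ T).card = hammingNorm c := by
    intro c
    rw [hammingNorm_eq_card]
    exact Finset.card_inter_add_card_sdiff _ _
  rw [Finset.card_eq_sum_card_fiberwise
    (f := fun c => ((univ.filter fun r => c r ≠ 0) ∩ T).card)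
    (t := (Finset.Icc (max 1 (l + j - h)) (min l j)).filter (fun i => Odd i))]
  · apply Finset.sum_congr rfl
    intro i hi
    simp only [Finset.mem_filter, Finset.mem_Icc, max_le_iff, le_min_iff] at hi
    obtain ⟨⟨⟨hi1, hi2⟩, hi3, hi4⟩, hodd⟩ := hi
    rw [Finset.filter_filter]
    have heq : (univ.filter fun c : Fin h → ZMod 2 =>
        (dotProduct v c = 1 ∧ hammingNorm c = j) ∧
          ((univ.filter fun r => c r ≠ 0) ∩ T).card = i) =
        univ.filter fun c : Fin h → ZMod 2 =>
          ((univ.filter fun r => c r ≠ 0) ∩ T).card = i ∧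
          ((univ.filter fun r => c r ≠ 0) \ T).card = j - i := by
      apply Finset.filter_congr
      intro c _
      rw [hdot c]
      have h1 := hsplit c
      constructor
      · rintro ⟨⟨_, hwtc⟩, hic⟩
        omega
      · rintro ⟨hic, hsc⟩
        refine ⟨⟨?_, ?_⟩, hic⟩
        · rw [hic]; exact hodd
        · omega
    rw [heq, count_pairs, hTcard, Finset.card_compl, Fintype.card_fin, hTcard]
  · intro c hc
    simp only [Finset.mem_coe, Finset.mem_filter, Finset.mem_univ, true_and] at hc
    obtain ⟨hc1, hc2⟩ := hc
    have hodd := (hdot c).mp hc1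
    have h1 := hsplit c
    have h2 : ((univ.filter fun r => c r ≠ 0) ∩ T).card ≤ l := by
      rw [← hTcard]
      exact Finset.card_le_card Finset.inter_subset_right
    have h3 := hsub c
    have h4 : 1 ≤ ((univ.filter fun r => c r ≠ 0) ∩ T).card := by
      rcases hodd with ⟨k, hk⟩; omega
    simp only [Finset.mem_coe, Finset.mem_filter, Finset.mem_Icc, max_le_iff, le_min_iff]
    exact ⟨⟨⟨h4, by omega⟩, h2, by omega⟩, hodd⟩

/-- Total probability of a column is 1. -/
lemma sum_colP_total (dmax h : ℕ) (Ω : ℕ → ℝ) (hdh : dmax ≤ h)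
    (hΩsum : ∑ j ∈ Finset.Icc 1 dmax, Ω j = 1) :
    ∑ c : Fin h → ZMod 2, colP dmax Ω c = 1 := by
  rw [sum_colP_group, ← hΩsum]
  apply Finset.sum_congr rfl
  intro j hj
  simp only [Finset.mem_Icc] at hj
  have hcount : ((univ : Finset (Fin h → ZMod 2)).filter
      fun c => hammingNorm c = j).card = h.choose j := by
    have heq : ((univ : Finset (Fin h → ZMod 2)).filter fun c => hammingNorm c = j) =
        univ.filter fun c : Fin h → ZMod 2 =>
          ((univ.filter fun r => c r ≠ 0) ∩ (univ : Finset (Fin h))).card = j ∧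
          ((univ.filter fun r => c r ≠ 0) \ (univ : Finset (Fin h))).card = 0 := by
      apply Finset.filter_congr
      intro c _
      have h1 : (univ.filter fun r => c r ≠ 0) \ (univ : Finset (Fin h)) = ∅ :=
        Finset.sdiff_eq_empty_iff_subset.mpr (Finset.subset_univ _)
      rw [Finset.inter_univ, h1, hammingNorm_eq_card]
      simp
    rw [heq, count_pairs]
    simp [Finset.card_univ, Fintype.card_fin]
  rw [hcount]
  have hne : (h.choose j : ℝ) ≠ 0 :=
    Nat.cast_ne_zero.mpr (Nat.choose_pos (le_trans hj.2 hdh)).ne'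
  field_simp

/-- The probability that a random column has odd overlap with `v` equals `p_l`. -/
lemma sum_colP_dot (dmax h l : ℕ) (Ω : ℕ → ℝ) (hdh : dmax ≤ h) (hlh : l ≤ h)
    (v : Fin h → ZMod 2) (hwt : hammingNorm v = l) :
    ∑ c ∈ univ.filter (fun c : Fin h → ZMod 2 => dotProduct v c = 1),
      colP dmax Ω c = pl dmax Ω h l := by
  rw [sum_colP_group, pl]
  apply Finset.sum_congr rfl
  intro j hj
  simp only [Finset.mem_Icc] at hj
  have hjh : j ≤ h := le_trans hj.2 hdh
  rw [Finset.filter_filter, count_dot l j v hwt hlh hjh, pjl]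
  rw [Nat.cast_sum, Finset.mul_sum, Finset.mul_sum]
  apply Finset.sum_congr rfl
  intro i hi
  simp only [Finset.mem_filter, Finset.mem_Icc, max_le_iff, le_min_iff] at hi
  obtain ⟨⟨⟨hi1, hi2⟩, hi3, hi4⟩, hodd⟩ := hi
  have hid := choose_exchange hlh hjh hi3 hi4 (by omega)
  have hidR : (h.choose l : ℝ) * ((l.choose i : ℝ) * ((h - l).choose (j - i) : ℝ)) =
      (h.choose j : ℝ) * ((j.choose i : ℝ) * ((h - j).choose (l - i) : ℝ)) := by
    exact_mod_cast hid
  have hCj : (h.choose j : ℝ) ≠ 0 := Nat.cast_ne_zero.mpr (Nat.choose_pos hjh).ne'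
  have hCl : (h.choose l : ℝ) ≠ 0 := Nat.cast_ne_zero.mpr (Nat.choose_pos hlh).ne'
  push_cast
  field_simp
  linear_combination Ω j * hidR


end LTAux

/-- If `v ∈ F₂^h` has Hamming weight `l`, `1 ≤ l ≤ h`, and `G ∈ F₂^{h×n}` is the
random LT generator matrix (`n` i.i.d. LT columns), then for every `0 ≤ d ≤ n` the
probability that the codeword `vᵀG` has Hamming weight `d` equals
`C(n,d)·p_l^d·(1−p_l)^{n−d}`. -/
theorem stmt_2 (dmax h n : ℕ) (Ω : ℕ → ℝ)
    (hΩpos : ∀ j ∈ Finset.Icc 1 dmax, 0 ≤ Ω j)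
    (hΩsum : ∑ j ∈ Finset.Icc 1 dmax, Ω j = 1)
    (hpos : 0 < h) (hnpos : 0 < n) (hdh : dmax ≤ h)
    (v : Fin h → ZMod 2) (l : ℕ) (hwt : hammingNorm v = l) (hl1 : 1 ≤ l) (hlh : l ≤ h)
    (d : ℕ) (hd : d ≤ n) :
    ∑ G ∈ Finset.univ.filter (fun G : Matrix (Fin h) (Fin n) (ZMod 2) =>
        hammingNorm (Matrix.vecMul v G) = d),
      ∏ i : Fin n, colP dmax Ω (fun r => G r i) =
    (n.choose d : ℝ) * (pl dmax Ω h l) ^ d * (1 - pl dmax Ω h l) ^ (n - d) := by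
  classical
  let e : (Fin n → Fin h → ZMod 2) ≃ Matrix (Fin h) (Fin n) (ZMod 2) :=
    { toFun := fun g => Matrix.of fun r i => g i r
      invFun := fun G i r => G r i
      left_inv := fun g => rfl
      right_inv := fun G => rfl }
  have hstep : (∑ G ∈ Finset.univ.filter (fun G : Matrix (Fin h) (Fin n) (ZMod 2) =>
        hammingNorm (Matrix.vecMul v G) = d),
      ∏ i : Fin n, colP dmax Ω (fun r => G r i)) =
      ∑ g ∈ (univ : Finset (Fin n → Fin h → ZMod 2)).filter
          (fun g => (univ.filter fun i => dotProduct v (g i) = 1).card = d),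
        ∏ i, colP dmax Ω (g i) := by
    rw [Finset.sum_filter, Finset.sum_filter, ← Equiv.sum_comp e]
    apply Finset.sum_congr rfl
    intro g _
    have hcond : hammingNorm (Matrix.vecMul v (e g)) = d ↔
        (univ.filter fun i => dotProduct v (g i) = 1).card = d := by
      rw [LTAux.hammingNorm_eq_card]
      have hfe : (univ.filter fun i => Matrix.vecMul v (e g) i ≠ 0) =
          (univ.filter fun i => dotProduct v (g i) = 1) := by
        apply Finset.filter_congr
        intro i _
        have hv : Matrix.vecMul v (e g) i = dotProduct v (g i) := rfl
        rw [hv]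
        exact LTAux.zmod2_ne_zero _
      rw [hfe]
    rw [if_congr hcond rfl rfl]
    rfl
  rw [hstep, LTAux.sum_binom (fun c : Fin h → ZMod 2 => colP dmax Ω c)
    (fun c : Fin h → ZMod 2 => dotProduct v c = 1) n d]
  have hq : (∑ a ∈ univ.filter (fun c : Fin h → ZMod 2 => dotProduct v c = 1),
      colP dmax Ω a) = pl dmax Ω h l :=
    LTAux.sum_colP_dot dmax h l Ω hdh hlh v hwt
  have htot : ∑ c : Fin h → ZMod 2, colP dmax Ω c = 1 :=
    LTAux.sum_colP_total dmax h Ω hdh hΩsum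
  have hsplit := Finset.sum_filter_add_sum_filter_not (univ : Finset (Fin h → ZMod 2))
    (fun c => dotProduct v c = 1) (colP dmax Ω)
  have hr : (∑ a ∈ univ.filter (fun c : Fin h → ZMod 2 => ¬ dotProduct v c = 1),
      colP dmax Ω a) = 1 - pl dmax Ω h l := by
    rw [hq, htot] at hsplit
    linarith
  rw [hq, hr]
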